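/- For every i ≥ 1 with 2i+1 ≤ n, the identities D(x_{2i}·x_{2i+1}) = x_{2i+1}² and (D(x_{2i}))² + x_1²·x_{2i}² = x_{2i+1}² hold in R. (This is the mod-2 Chow identity ρ(p_{2i+1}) = (Sq²_𝒪(c̄_{2i}))² + ρ(p_{2i})·Sq²_𝒪(c̄_1) = Sq²_𝒪(c̄_{2i}·c̄_{2i+1}) = c̄_{2i+1}² proved in Proposition 3.24 of the paper, using ρ(p_{2i}) = c̄_{2i}² and Sq²_𝒪(c̄_1) = c̄_1².) -/
import Mathlib


open MvPolynomial

/-- The variable `x_j` (1-indexed, `1 ≤ j ≤ n`) in the mod-2 Chow ring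
`Ch^•(BGL_n) ≅ (ℤ/2ℤ)[x_1,…,x_n]`; by convention `x_j = 0` for `j` out of range
(in particular `x_{n+1} = 0`). -/
noncomputable def xv (n : ℕ) (j : ℕ) : MvPolynomial (Fin n) (ZMod 2) :=
  if h : 1 ≤ j ∧ j ≤ n then X (⟨j - 1, by omega⟩ : Fin n) else 0


/-- Proposition 3.24 mod 2: for `2i+1 ≤ n`, `D(x_{2i}·x_{2i+1}) = x_{2i+1}²` and
`(D(x_{2i}))² + x_1²·x_{2i}² = x_{2i+1}²` in `Ch^•(BGL_n)`. -/
theorem odd_pontryagin_mod2 (n : ℕ) (hn : 1 ≤ n)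
    (D : Derivation (ZMod 2) (MvPolynomial (Fin n) (ZMod 2)) (MvPolynomial (Fin n) (ZMod 2)))
    (hD : ∀ j : ℕ, 1 ≤ j → j ≤ n →
      D (xv n j) = xv n 1 * xv n j + C ((j - 1 : ℕ) : ZMod 2) * xv n (j + 1)) :
    ∀ i : ℕ, 1 ≤ i → 2 * i + 1 ≤ n →
      D (xv n (2 * i) * xv n (2 * i + 1)) = (xv n (2 * i + 1)) ^ 2 ∧
      (D (xv n (2 * i))) ^ 2 + (xv n 1) ^ 2 * (xv n (2 * i)) ^ 2 = (xv n (2 * i + 1)) ^ 2 := by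
  intro i hi h2i
  have hb : D (xv n (2 * i)) = xv n 1 * xv n (2 * i) + xv n (2 * i + 1) := by
    rw [hD (2 * i) (by omega) (by omega)]
    have : ((2 * i - 1 : ℕ) : ZMod 2) = 1 := by
      have : 2 * i - 1 = 2 * (i - 1) + 1 := by omega
      rw [this]; push_cast; rw [show ((2:ZMod 2)) = 0 from rfl]; ring
    rw [this, map_one, one_mul]
  have hc : D (xv n (2 * i + 1)) = xv n 1 * xv n (2 * i + 1) := by
    rw [hD (2 * i + 1) (by omega) (by omega)]
    have : ((2 * i + 1 - 1 : ℕ) : ZMod 2) = 0 := by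
      push_cast; rw [show ((2:ZMod 2)) = 0 from rfl]; ring
    rw [this, map_zero, zero_mul, add_zero]
  set a := xv n 1
  set b := xv n (2 * i)
  set c := xv n (2 * i + 1)
  have h2 : (2 : MvPolynomial (Fin n) (ZMod 2)) = 0 := by
    have := CharP.cast_eq_zero (MvPolynomial (Fin n) (ZMod 2)) 2
    exact_mod_cast this
  constructor
  · rw [Derivation.leibniz, hb, hc, smul_eq_mul, smul_eq_mul]
    have : b * (a * c) + c * (a * b + c) = c ^ 2 + 2 * (a * b * c) := by ring
    rw [this, h2, zero_mul, add_zero]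
  · rw [hb]
    have : (a * b + c) ^ 2 + a ^ 2 * b ^ 2 = c ^ 2 + 2 * (a ^ 2 * b ^ 2 + a * b * c) := by ring
    rw [this, h2, zero_mul, add_zero]
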